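/- arXiv:2012.12828 — 4 statements merged into one kernel-verified Lean document; each statement's English description precedes it below -/
import Mathlib

section
/- Let (M,g) be a Riemannian 3-manifold with volume form μ, and let X be a nowhere-vanishing vector field on M satisfying curl X = fX for a smooth positive function f (equivalently, dα = f ι_X μ where α = g(X,·)). Then α ∧ dα > 0 everywhere, i.e., α is a contact form on M. -/
open scoped RealInnerProductSpace

noncomputable section

/-- Model of the tangent space of a Riemannian 3-manifold at a point (with the
metric identified with the Euclidean one in an orthonormal frame). -/
abbrev V3 := EuclideanSpace ℝ (Fin 3)

/-- Wedge product of a 1-form with a 2-form, with forms represented as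
functions of vectors. -/
def w13 (a : V3 → ℝ) (b : V3 → V3 → ℝ) : V3 → V3 → V3 → ℝ :=
  fun u v w => a u * b v w - a v * b u w + a w * b u v

/-- Interior product of a vector with a 3-form. -/
def iota3 (X : V3) (m : V3 → V3 → V3 → ℝ) : V3 → V3 → ℝ :=
  fun v w => m X v w

/-- The Riemannian volume 3-form (the determinant in an orthonormal frame). -/
def vol3 : V3 → V3 → V3 → ℝ := fun u v w =>
  u 0 * (v 1 * w 2 - v 2 * w 1) - u 1 * (v 0 * w 2 - v 2 * w 0)
    + u 2 * (v 0 * w 1 - v 1 * w 0)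

/-- If `X` is nowhere vanishing, `α = g(X,·)` its metric-dual
1-form and `dα = f ι_X μ` with `f > 0`, then `α ∧ dα = (f g(X,X)) μ > 0`
everywhere, i.e. `α` is a contact form. -/
theorem stmt0 {M : Type*} (X : M → V3) (f : M → ℝ)
    (hX : ∀ x, X x ≠ 0) (hf : ∀ x, 0 < f x)
    (α : M → V3 → ℝ) (hα : ∀ x v, α x v = ⟪X x, v⟫)
    (dα : M → V3 → V3 → ℝ)
    (hdα : ∀ x, dα x = fun v w => f x * iota3 (X x) vol3 v w) :
    ∀ x, (w13 (α x) (dα x) = fun u v w => (f x * ⟪X x, X x⟫) * vol3 u v w)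
      ∧ 0 < f x * ⟪X x, X x⟫ := by
  intro x
  constructor
  · funext u v w
    simp only [w13, hα, hdα x, iota3, vol3,
      PiLp.inner_apply, RCLike.inner_apply, conj_trivial,
      Fin.sum_univ_three]
    ring
  · exact mul_pos (hf x) ((lt_of_le_of_ne real_inner_self_nonneg fun h => hX x (real_inner_self_nonpos.mp h.ge)))
end
end

section
/- Let T = (Q, q₀, q_halt, Σ, δ) be a Turing machine with global transition function Δ : (Q \ {q_halt}) × Σ^ℤ → Q × Σ^ℤ. Define the generalized shift φ on A^ℤ, A = Σ ∪ Q, by the maps F, G depending on positions {−1,0,1} as in Moore's construction, and define the injective encoding map ψ : Q × Σ^ℤ → A^ℤ by ψ(q,(t_i)) = (…t_{−1}.q t₀ t₁…) (state symbol placed at position 0, tape symbol t_i placed at position i+1 for i ≥ 0 and position i for i < 0). Then Δ = ψ⁻¹ ∘ φ ∘ ψ on the domain of Δ. -/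
section TMdefs
variable {Q Λ : Type*}

/-- One step of a Turing machine with transition function components
`F₁ : Q × Σ → Q`, `F₂ : Q × Σ → Σ`, `F₃ : Q × Σ → {−1,0,1} ⊆ ℤ`:
replace the state by `F₁(q,t₀)`, the scanned symbol `t₀` by `F₂(q,t₀)` and
shift the tape by `F₃(q,t₀)` (`1` = left shift, `−1` = right shift).
This is the global transition function `Δ` on `Q × Σ^ℤ`. -/
def tmStep (F1 : Q → Λ → Q) (F2 : Q → Λ → Λ) (F3 : Q → Λ → ℤ) :
    Q × (ℤ → Λ) → Q × (ℤ → Λ) := fun c =>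
  (F1 c.1 (c.2 0),
    fun n => Function.update c.2 0 (F2 c.1 (c.2 0)) (n + F3 c.1 (c.2 0)))

/-- The encoding `ψ : Q × Σ^ℤ → A^ℤ`, `A = Σ ⊔ Q`: the state symbol is placed
at position `0`, the tape symbol `t_i` at position `i+1` for `i ≥ 0` and at
position `i` for `i < 0`. -/
def encode (q : Q) (t : ℤ → Λ) : ℤ → Q ⊕ Λ := fun n =>
  if n = 0 then Sum.inl q else if 0 < n then Sum.inr (t (n - 1)) else Sum.inr (t n)

/-- Moore's map `F` of the generalized shift, depending on the symbols at
positions `−1, 0, 1`. -/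
def mooreF (F3 : Q → Λ → ℤ) : (Q ⊕ Λ) × (Q ⊕ Λ) × (Q ⊕ Λ) → ℤ
  | (Sum.inr _, Sum.inl q, Sum.inr a) => F3 q a
  | _ => 0

/-- Moore's map `G` of the generalized shift, modifying the symbols at
positions `−1, 0, 1`. -/
def mooreG (F1 : Q → Λ → Q) (F2 : Q → Λ → Λ) (F3 : Q → Λ → ℤ) :
    (Q ⊕ Λ) × (Q ⊕ Λ) × (Q ⊕ Λ) → (Q ⊕ Λ) × (Q ⊕ Λ) × (Q ⊕ Λ)
  | (Sum.inr b, Sum.inl q, Sum.inr a) =>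
      if F3 q a = 1 then (Sum.inr b, Sum.inr (F2 q a), Sum.inl (F1 q a))
      else if F3 q a = -1 then (Sum.inl (F1 q a), Sum.inr b, Sum.inr (F2 q a))
      else (Sum.inr b, Sum.inl (F1 q a), Sum.inr (F2 q a))
  | x => x

/-- The generalized shift with `D_F = D_G = {−1,0,1}` determined by maps
`F : A³ → ℤ` and `G : A³ → A³`: first modify the symbols at positions
`−1, 0, 1` by `G`, then shift the whole sequence by `F`. -/
def gshift {A : Type*} (F : A × A × A → ℤ) (G : A × A × A → A × A × A)
    (s : ℤ → A) : ℤ → A :=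
  let a := (s (-1), s 0, s 1)
  let s' : ℤ → A := fun n =>
    if n = -1 then (G a).1 else if n = 0 then (G a).2.1
    else if n = 1 then (G a).2.2 else s n
  fun n => s' (n + F a)

end TMdefs

/-- (Moore's conjugation lemma.) The encoding `ψ` is injective
and conjugates the global transition function `Δ` of the Turing machine with
Moore's generalized shift `φ` on its domain: `ψ ∘ Δ = φ ∘ ψ`, i.e.
`Δ = ψ⁻¹ ∘ φ ∘ ψ` on `(Q \ {q_halt}) × Σ^ℤ`. -/
theorem stmt5 {Q Λ : Type*} (F1 : Q → Λ → Q) (F2 : Q → Λ → Λ) (F3 : Q → Λ → ℤ)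
    (q_halt : Q) (h3 : ∀ q a, F3 q a = 1 ∨ F3 q a = 0 ∨ F3 q a = -1) :
    Function.Injective (fun c : Q × (ℤ → Λ) => encode c.1 c.2) ∧
    ∀ (q : Q) (t : ℤ → Λ), q ≠ q_halt →
      gshift (mooreF F3) (mooreG F1 F2 F3) (encode q t)
        = encode (tmStep F1 F2 F3 (q, t)).1 (tmStep F1 F2 F3 (q, t)).2 := by
  constructor
  · rintro ⟨q, t⟩ ⟨q', t'⟩ h
    simp only at h
    obtain rfl : q = q' := by simpa [encode] using congrFun h 0
    have ht : t = t' := by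
      funext n
      rcases le_or_gt 0 n with hn | hn
      · have := congrFun h (n + 1)
        simp only [encode, if_neg (show ¬(n + 1 = 0) by omega),
          if_pos (show (0:ℤ) < n + 1 by omega)] at this
        simpa using this
      · have := congrFun h n
        simp only [encode, if_neg (show ¬(n = 0) by omega),
          if_neg (show ¬((0:ℤ) < n) by omega)] at this
        simpa using this
    rw [ht]
  · intro q t _
    funext n
    have e1 : encode q t (-1) = Sum.inr (t (-1)) := rfl
    have e0 : encode q t 0 = Sum.inl q := rfl
    have e2 : encode q t 1 = Sum.inr (t 0) := rfl
    simp only [gshift, e1, e0, e2, mooreF, mooreG, tmStep, encode, Function.update,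
      eq_rec_constant, dite_eq_ite]
    rcases h3 q (t 0) with h | h | h <;> simp only [h] <;>
      norm_num <;> split_ifs <;> (try dsimp only) <;>
        first
          | rfl
          | omega
          | (exfalso; omega)
          | (congr 2 <;> omega)
end

section
/- An injective generalized shift φ : A^ℤ → A^ℤ (A finite) whose defining maps F, G have finite domains is surjective, hence bijective. -/
/-- (Moore's Lemma 2.) A generalized shift on `A^ℤ`, `A`
finite — i.e. a map `φ(s) = n ↦ G(s)(n + F(s))` where `F : A^ℤ → ℤ` and the
modification `G : A^ℤ → A^ℤ` depend only on the (finitely many) positions in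
`S`, and `G` alters only the positions in `S` — is surjective whenever it is
injective; hence an injective generalized shift is bijective. -/
theorem stmt8 {A : Type*} [Finite A] (S : Finset ℤ)
    (F : (ℤ → A) → ℤ) (G : (ℤ → A) → (ℤ → A))
    (hF : ∀ s s', (∀ i ∈ S, s i = s' i) → F s = F s')
    (hG : ∀ s s', (∀ i ∈ S, s i = s' i) → ∀ i ∈ S, G s i = G s' i)
    (hGoff : ∀ s, ∀ i ∉ S, G s i = s i)
    (φ : (ℤ → A) → (ℤ → A)) (hφ : ∀ s n, φ s n = G s (n + F s))
    (hinj : Function.Injective φ) :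
    Function.Surjective φ ∧ Function.Bijective φ := by
  classical
  have hsurj : Function.Surjective φ := by
    intro t
    rcases isEmpty_or_nonempty A with hA | hA
    · exact (hA.false (t 0)).elim
    haveI : Inhabited A := Classical.inhabited_of_nonempty hA
    haveI := Fintype.ofFinite A
    -- extension of a pattern on S to a full configuration
    set ext : ((↥S : Type) → A) → (ℤ → A) :=
      fun w n => if h : n ∈ S then w ⟨n, h⟩ else default with hext
    set k : ((↥S : Type) → A) → ℤ := fun w => F (ext w) with hk
    -- key construction: if `tt` satisfies the cylinder conditions for pattern w,
    -- then `tt` has a preimage agreeing with w on S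
    have key : ∀ (w : (↥S : Type) → A) (tt : ℤ → A),
        (∀ i, ∀ hi : i ∈ S, tt (i - k w) = G (ext w) i) →
        ∃ s, (∀ i, ∀ hi : i ∈ S, s i = w ⟨i, hi⟩) ∧ φ s = tt := by
      intro w tt ht
      set s : ℤ → A := fun n => if h : n ∈ S then w ⟨n, h⟩ else tt (n - k w) with hs
      have hsS : ∀ i ∈ S, s i = ext w i := by
        intro i hi; simp [hs, hext, hi]
      have hFs : F s = k w := hF _ _ hsS
      refine ⟨s, fun i hi => by simp [hs, hi], ?_⟩
      funext n
      rw [hφ, hFs]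
      by_cases h : n + k w ∈ S
      · rw [hG s (ext w) hsS (n + k w) h]
        have := ht (n + k w) h
        simpa using this.symm
      · rw [hGoff s _ h]
        simp [hs, h]
    -- the finite window T
    set T : Finset ℤ :=
      Finset.univ.biUnion (fun w : (↥S : Type) → A => S.image (fun i => i - k w)) with hT
    have memT : ∀ (w : (↥S : Type) → A) (i : ℤ), i ∈ S → i - k w ∈ T := by
      intro w i hi
      exact Finset.mem_biUnion.2 ⟨w, Finset.mem_univ _, Finset.mem_image.2 ⟨i, hi, rfl⟩⟩
    -- the image cylinders, restricted to the window T
    set E : ((↥S : Type) → A) → Finset ((↥T : Type) → A) := fun w =>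
      Finset.univ.filter
        (fun u => ∀ i, ∀ hi : i ∈ S, u ⟨i - k w, memT w i hi⟩ = G (ext w) i) with hE
    -- cardinality of each E w
    have cardE : ∀ w, (E w).card = Fintype.card A ^ (T.card - S.card) := by
      intro w
      set Sw : Finset ℤ := S.image (fun i => i - k w) with hSw
      have hSwT : Sw ⊆ T := by
        intro j hj
        rcases Finset.mem_image.1 hj with ⟨i, hi, rfl⟩
        exact memT w i hi
      have hSwcard : Sw.card = S.card :=
        Finset.card_image_of_injective _ (fun a b hab => by omega)
      -- fill map
      set f : ((↥(T \ Sw) : Type) → A) → ((↥T : Type) → A) := fun v j =>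
        if h : (j : ℤ) ∈ Sw then G (ext w) ((j : ℤ) + k w)
        else v ⟨(j : ℤ), Finset.mem_sdiff.2 ⟨j.2, h⟩⟩ with hf
      have hfinj : Function.Injective f := by
        intro v v' hvv
        funext j
        have hj : (j : ℤ) ∈ T := Finset.mem_sdiff.1 j.2 |>.1
        have hj' : (j : ℤ) ∉ Sw := Finset.mem_sdiff.1 j.2 |>.2
        have := congrFun hvv ⟨(j : ℤ), hj⟩
        simpa [hf, hj'] using this
      have himg : Finset.univ.image f = E w := by
        apply Finset.ext
        intro u
        simp only [Finset.mem_image, Finset.mem_univ, true_and, hE, Finset.mem_filter]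
        constructor
        · rintro ⟨v, rfl⟩
          intro i hi
          have hmem : i - k w ∈ Sw := Finset.mem_image.2 ⟨i, hi, rfl⟩
          show (if h : i - k w ∈ Sw then G (ext w) (i - k w + k w)
            else v ⟨i - k w, Finset.mem_sdiff.2 ⟨memT w i hi, h⟩⟩) = G (ext w) i
          rw [dif_pos hmem]
          congr 1
          omega
        · intro hu
          refine ⟨fun j => u ⟨(j : ℤ), (Finset.mem_sdiff.1 j.2).1⟩, ?_⟩
          funext j
          by_cases h : (j : ℤ) ∈ Sw
          · rcases Finset.mem_image.1 h with ⟨i, hi, hij⟩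
            simp only [hf, dif_pos h]
            have h1 : (⟨i - k w, memT w i hi⟩ : (↥T : Type)) = j :=
              Subtype.ext (by show i - k w = (j : ℤ); omega)
            calc G (ext w) ((j : ℤ) + k w) = G (ext w) i := by
                  congr 1
                  omega
              _ = u ⟨i - k w, memT w i hi⟩ := (hu i hi).symm
              _ = u j := by rw [h1]
          · simp [hf, h]
      have hcard := Finset.card_image_of_injective (Finset.univ) hfinj
      rw [himg] at hcard
      rw [hcard, Finset.card_univ, Fintype.card_fun, Fintype.card_coe,
        Finset.card_sdiff_of_subset hSwT, hSwcard]
    -- disjointness of the E w's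
    have hdisj : ∀ w ∈ (Finset.univ : Finset ((↥S : Type) → A)),
        ∀ w' ∈ Finset.univ, w ≠ w' → Disjoint (E w) (E w') := by
      intro w _ w' _ hww
      rw [Finset.disjoint_left]
      intro u huw huw'
      -- extend u to a full configuration
      set t0 : ℤ → A := fun n => if h : n ∈ T then u ⟨n, h⟩ else default with ht0
      have hcyl : ∀ (w₀ : (↥S : Type) → A), u ∈ E w₀ →
          ∀ i, ∀ hi : i ∈ S, t0 (i - k w₀) = G (ext w₀) i := by
        intro w₀ hu i hi
        have hmem : i - k w₀ ∈ T := memT w₀ i hi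
        have := (Finset.mem_filter.1 hu).2 i hi
        simp only [ht0, dif_pos hmem]
        exact this
      obtain ⟨s, hsw, hst⟩ := key w t0 (hcyl w huw)
      obtain ⟨s', hsw', hst'⟩ := key w' t0 (hcyl w' huw')
      have hss : s = s' := hinj (by rw [hst, hst'])
      apply hww
      funext j
      have := hsw j.1 j.2
      rw [hss] at this
      rw [← Subtype.coe_eta j j.2]
      rw [← this, hsw' j.1 j.2]
    -- counting: the union of the E w's is everything
    have hScard : S.card ≤ T.card := by
      obtain ⟨w0⟩ : Nonempty ((↥S : Type) → A) := ⟨fun _ => default⟩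
      have hsub : S.image (fun i => i - k w0) ⊆ T := by
        intro j hj
        rcases Finset.mem_image.1 hj with ⟨i, hi, rfl⟩
        exact memT w0 i hi
      have := Finset.card_le_card hsub
      rwa [Finset.card_image_of_injective _ (fun a b hab => by omega)] at this
    have hunion : (Finset.univ.biUnion E) = (Finset.univ : Finset ((↥T : Type) → A)) := by
      apply Finset.eq_univ_of_card
      rw [Finset.card_biUnion hdisj]
      have : ∑ w : (↥S : Type) → A, (E w).card
          = Fintype.card A ^ S.card * Fintype.card A ^ (T.card - S.card) := by
        rw [Finset.sum_congr rfl (fun w _ => cardE w), Finset.sum_const, Finset.card_univ,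
          Fintype.card_fun, Fintype.card_coe, smul_eq_mul]
      rw [this, ← pow_add, Nat.add_sub_cancel' hScard, Fintype.card_fun, Fintype.card_coe]
    -- finish: t's restriction to T lies in some E w
    have : (fun j : (↥T : Type) => t (j : ℤ)) ∈ Finset.univ.biUnion E := by
      rw [hunion]; exact Finset.mem_univ _
    rcases Finset.mem_biUnion.1 this with ⟨w, -, hw⟩
    have hcyl : ∀ i, ∀ hi : i ∈ S, t (i - k w) = G (ext w) i := by
      intro i hi
      exact (Finset.mem_filter.1 hw).2 i hi
    obtain ⟨s, -, hst⟩ := key w t hcyl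
    exact ⟨s, hst⟩
  exact ⟨hsurj, hinj, hsurj⟩
end

section
/- Consider the Moore generalized shift φ with D_F = D_G = {−1,0,1} associated to a Turing machine T with extended transition function. For every sequence s ∈ A^ℤ of the form s = ψ(q, t) with q ≠ q_halt, φ(s) = ψ(Δ(q,t)); in particular, if T with input (q₀, t) reaches the halting state after exactly n steps, then φⁿ(ψ(q₀,t)) is a sequence with symbol q_halt at position 0, and φ^m(ψ(q₀,t)) has a non-halting state symbol at position 0 for all m < n. -/
private lemma mooreKey {Q Λ : Type*} (F1 : Q → Λ → Q) (F2 : Q → Λ → Λ) (F3 : Q → Λ → ℤ)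
    (q : Q) (t : ℤ → Λ)
    (hd : F3 q (t 0) = 1 ∨ F3 q (t 0) = 0 ∨ F3 q (t 0) = -1) :
    gshift (mooreF F3) (mooreG F1 F2 F3) (encode q t)
      = encode (tmStep F1 F2 F3 (q, t)).1 (tmStep F1 F2 F3 (q, t)).2 := by
  have e1 : encode q t (-1) = Sum.inr (t (-1)) := by simp [encode]
  have e0 : encode q t 0 = Sum.inl q := by simp [encode]
  have e2 : encode q t 1 = Sum.inr (t 0) := by simp [encode]
  funext n
  rcases hd with hd | hd | hd <;>
    simp only [gshift, e1, e0, e2, mooreF, mooreG, tmStep, hd] <;>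
    norm_num <;>
    simp only [encode, Function.update, eq_rec_constant, dite_eq_ite] <;>
    split_ifs <;>
    first
      | rfl
      | omega
      | (exfalso; omega)
      | (congr 2 <;> omega)

private lemma mooreIter {Q Λ : Type*} (F1 : Q → Λ → Q) (F2 : Q → Λ → Λ) (F3 : Q → Λ → ℤ)
    (h3 : ∀ q a, F3 q a = 1 ∨ F3 q a = 0 ∨ F3 q a = -1) (q : Q) (t : ℤ → Λ) (n : ℕ) :
    (gshift (mooreF F3) (mooreG F1 F2 F3))^[n] (encode q t)
      = encode ((tmStep F1 F2 F3)^[n] (q, t)).1 ((tmStep F1 F2 F3)^[n] (q, t)).2 := by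
  induction n with
  | zero => rfl
  | succ k ih =>
      rw [Function.iterate_succ_apply', ih, Function.iterate_succ_apply']
      have := mooreKey F1 F2 F3 ((tmStep F1 F2 F3)^[k] (q, t)).1
        ((tmStep F1 F2 F3)^[k] (q, t)).2 (h3 _ _)
      simpa using this

/-- For the Moore generalized shift `φ` associated to a
Turing machine with transition function extended by
`δ(q_halt,t₀) = (q₀,t₀,0)`: for every sequence of the form `ψ(q,t)` with
`q ≠ q_halt` one has `φ(ψ(q,t)) = ψ(Δ(q,t))`; and if the machine with input
`(q₀,t)` reaches the halting state after exactly `n` steps, then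
`φⁿ(ψ(q₀,t))` has the symbol `q_halt` at position `0`, while `φ^m(ψ(q₀,t))`
has a non-halting state symbol at position `0` for all `m < n`. -/
theorem stmt15 {Q Λ : Type*} (F1 : Q → Λ → Q) (F2 : Q → Λ → Λ) (F3 : Q → Λ → ℤ)
    (q₀ q_halt : Q) (h3 : ∀ q a, F3 q a = 1 ∨ F3 q a = 0 ∨ F3 q a = -1)
    (hext : ∀ a, F1 q_halt a = q₀ ∧ F2 q_halt a = a ∧ F3 q_halt a = 0) :
    (∀ (q : Q) (t : ℤ → Λ), q ≠ q_halt →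
      gshift (mooreF F3) (mooreG F1 F2 F3) (encode q t)
        = encode (tmStep F1 F2 F3 (q, t)).1 (tmStep F1 F2 F3 (q, t)).2) ∧
    ∀ (t : ℤ → Λ) (n : ℕ),
      ((tmStep F1 F2 F3)^[n] (q₀, t)).1 = q_halt →
      (∀ m < n, ((tmStep F1 F2 F3)^[m] (q₀, t)).1 ≠ q_halt) →
      ((gshift (mooreF F3) (mooreG F1 F2 F3))^[n] (encode q₀ t) 0
          = Sum.inl q_halt ∧
        ∀ m < n, ∃ q' : Q, q' ≠ q_halt ∧
          (gshift (mooreF F3) (mooreG F1 F2 F3))^[m] (encode q₀ t) 0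
            = Sum.inl q') := by
  constructor
  · intro q t _
    exact mooreKey F1 F2 F3 q t (h3 q (t 0))
  · intro t n hn hm
    refine ⟨?_, ?_⟩
    · rw [mooreIter F1 F2 F3 h3 q₀ t n]
      simp [encode, hn]
    · intro m hmn
      refine ⟨((tmStep F1 F2 F3)^[m] (q₀, t)).1, hm m hmn, ?_⟩
      rw [mooreIter F1 F2 F3 h3 q₀ t m]
      simp [encode]
end
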